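/- Suppose the Fréchet derivative f' is uniformly continuous on C, C is weakly compact, f is strictly convex on C, and the stepsizes (γ_k) are chosen either by line minimization or by the open loop rule. Then the composite minimization has a unique solution x* in C, and the sequence (x_k) generated by the Frank–Wolfe algorithm converges weakly to x*. -/

import Mathlib

open Filter Topology Set


/-- Gradient inequality for a convex Fréchet-differentiable function. -/
lemma grad_ineq' {X : Type*} [NormedAddCommGroup X] [NormedSpace ℝ X]
    {f : X → ℝ} {f' : X → X →L[ℝ] ℝ}
    (hfconv : ConvexOn ℝ Set.univ f) (hfderiv : ∀ x, HasFDerivAt f (f' x) x)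
    (a b : X) : f' a (b - a) ≤ f b - f a := by
  set g : ℝ → ℝ := fun t => f (a + t • (b - a)) with hg
  have hcurve : ∀ t : ℝ, HasDerivAt (fun s : ℝ => a + s • (b - a)) (b - a) t := by
    intro t
    simpa using (((hasDerivAt_id t).smul_const (b - a)).const_add a)
  have hgderiv : ∀ t : ℝ, HasDerivAt g (f' (a + t • (b - a)) (b - a)) t := by
    intro t
    exact (hfderiv (a + t • (b - a))).comp_hasDerivAt t (hcurve t)
  have hgconv : ConvexOn ℝ Set.univ g := by
    refine ⟨convex_univ, ?_⟩
    intro t₁ _ t₂ _ p q hp hq hpq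
    have hpt : a + (p * t₁ + q * t₂) • (b - a)
        = p • (a + t₁ • (b - a)) + q • (a + t₂ • (b - a)) := by
      calc a + (p * t₁ + q * t₂) • (b - a)
          = (p + q) • a + (p * t₁ + q * t₂) • (b - a) := by rw [hpq, one_smul]
        _ = p • (a + t₁ • (b - a)) + q • (a + t₂ • (b - a)) := by module
    have := hfconv.2 (mem_univ (a + t₁ • (b - a))) (mem_univ (a + t₂ • (b - a))) hp hq hpq
    simpa [g, smul_eq_mul, hpt] using this
  have hslope := hgconv.le_slope_of_hasDerivAt (mem_univ (0:ℝ)) (mem_univ (1:ℝ))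
    zero_lt_one (by simpa using hgderiv 0)
  have hs : slope g 0 1 = f b - f a := by
    simp [slope, g]
  rw [hs] at hslope
  simpa [g] using hslope


lemma recur_tendsto' {h β : ℕ → ℝ} (hh : ∀ k, 0 ≤ h k)
    (hβ : ∀ k, β k ∈ Set.Ioc (0:ℝ) 1)
    (hsum : Tendsto (fun n => ∑ k ∈ Finset.range n, β k) atTop atTop)
    (hrec : ∀ ε > 0, ∀ᶠ k in atTop, h (k+1) ≤ (1 - β k) * h k + β k * ε) :
    Tendsto h atTop (𝓝 0) := by
  rw [Metric.tendsto_atTop]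
  intro ε hε
  obtain ⟨N₀, hN₀⟩ := (hrec (ε/2) (by linarith)).exists_forall_of_atTop
  set p : ℕ → ℝ := fun k => max (h k - ε/2) 0 with hp
  have hppos : ∀ k, 0 ≤ p k := fun k => le_max_right _ _
  have hβnn : ∀ k, (0:ℝ) ≤ 1 - β k := fun k => by have := (hβ k).2; linarith
  have hpstep : ∀ k, N₀ ≤ k → p (k+1) ≤ (1 - β k) * p k := by
    intro k hk
    have h1 : h (k+1) - ε/2 ≤ (1 - β k) * (h k - ε/2) := by
      have := hN₀ k hk
      have hb := (hβ k).1
      nlinarith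
    have h2 : (1 - β k) * (h k - ε/2) ≤ (1 - β k) * p k :=
      mul_le_mul_of_nonneg_left (le_max_left _ _) (hβnn k)
    exact max_le (h1.trans h2) (mul_nonneg (hβnn k) (hppos k))
  have hpdec : ∀ k, N₀ ≤ k → p (k+1) ≤ p k := by
    intro k hk
    refine (hpstep k hk).trans ?_
    nlinarith [hppos k, (hβ k).1]
  have hexp : ∀ m : ℕ,
      p (N₀ + m) ≤ Real.exp (-(∑ i ∈ Finset.range m, β (N₀ + i))) * p N₀ := by
    intro m
    induction m with
    | zero => simp
    | succ m ih =>
      have hstep := hpstep (N₀ + m) (Nat.le_add_right _ _)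
      have h1 : (1 - β (N₀ + m)) * p (N₀ + m)
          ≤ Real.exp (-(β (N₀ + m))) * (Real.exp (-(∑ i ∈ Finset.range m, β (N₀ + i))) * p N₀) := by
        apply mul_le_mul
        · linarith [Real.add_one_le_exp (-(β (N₀ + m)))]
        · exact ih
        · exact hppos _
        · positivity
      calc p (N₀ + (m+1)) = p ((N₀ + m) + 1) := by ring_nf
        _ ≤ (1 - β (N₀ + m)) * p (N₀ + m) := hstep
        _ ≤ Real.exp (-(β (N₀ + m))) * (Real.exp (-(∑ i ∈ Finset.range m, β (N₀ + i))) * p N₀) := h1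
        _ = Real.exp (-(∑ i ∈ Finset.range (m+1), β (N₀ + i))) * p N₀ := by
            rw [Finset.sum_range_succ, neg_add, Real.exp_add]
            ring
  have htail : Tendsto (fun m => ∑ i ∈ Finset.range m, β (N₀ + i)) atTop atTop := by
    have h1 : Tendsto (fun m => ∑ k ∈ Finset.range (N₀ + m), β k) atTop atTop :=
      hsum.comp (tendsto_atTop_mono (fun m => Nat.le_add_left m N₀) tendsto_id)
    have h2 : ∀ m, ∑ i ∈ Finset.range m, β (N₀ + i)
        = ∑ k ∈ Finset.range (N₀ + m), β k - ∑ k ∈ Finset.range N₀, β k := by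
      intro m
      rw [Finset.sum_range_add]
      ring
    simp only [h2]
    exact tendsto_atTop_add_const_right atTop _ h1
  have hlim : Tendsto (fun m => Real.exp (-(∑ i ∈ Finset.range m, β (N₀ + i))) * p N₀)
      atTop (𝓝 0) := by
    have := (Real.tendsto_exp_neg_atTop_nhds_zero.comp htail).mul_const (p N₀)
    simpa using this
  obtain ⟨m, hm⟩ := (hlim.eventually (gt_mem_nhds (half_pos hε))).exists
  refine ⟨N₀ + m, ?_⟩
  have hpsmall : ∀ n, N₀ + m ≤ n → p n < ε/2 := by
    intro n hn
    induction n, hn using Nat.le_induction with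
    | base => exact (hexp m).trans_lt hm
    | succ n hn ih =>
      exact (hpdec n (le_trans (Nat.le_add_right _ _) hn)).trans_lt ih
  intro n hn
  have := hpsmall n hn
  have hb : h n - ε/2 ≤ p n := le_max_left _ _
  have : h n < ε := by linarith
  simpa [abs_of_nonneg (hh n)] using this


lemma descent' {X : Type*} [NormedAddCommGroup X] [NormedSpace ℝ X]
    {C : Set X} (hCcv : Convex ℝ C) {f : X → ℝ} {f' : X → X →L[ℝ] ℝ}
    (hfderiv : ∀ x, HasFDerivAt f (f' x) x) (hfUC : UniformContinuousOn f' C)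
    {D : ℝ} (hD : ∀ u ∈ C, ∀ v ∈ C, ‖u - v‖ ≤ D)
    {ε : ℝ} (hε : 0 < ε) :
    ∃ δ > 0, ∀ u ∈ C, ∀ v ∈ C, ∀ t ∈ Set.Icc (0:ℝ) 1, t * D < δ →
      f (u + t • (v - u)) ≤ f u + t * (f' u (v - u)) + t * (ε * D) := by
  obtain ⟨δ, hδpos, hδ⟩ := (Metric.uniformContinuousOn_iff.1 hfUC) ε hε
  refine ⟨δ, hδpos, ?_⟩
  rintro u hu v hv t ⟨ht0, ht1⟩ htD
  rcases eq_or_lt_of_le ht0 with rfl | htpos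
  · simp
  set d : X := v - u with hd
  have hdD : ‖d‖ ≤ D := by rw [hd, norm_sub_rev]; exact hD u hu v hv
  -- the curve and composed function
  set c : ℝ → X := fun s => u + s • (t • d) with hc
  have hcurve : ∀ s : ℝ, HasDerivAt c (t • d) s := by
    intro s
    simpa [c] using (((hasDerivAt_id s).smul_const (t • d)).const_add u)
  set ψ : ℝ → ℝ := fun s => f (c s) with hψ
  have hψderiv : ∀ s : ℝ, HasDerivAt ψ (f' (c s) (t • d)) s := by
    intro s
    exact (hfderiv (c s)).comp_hasDerivAt s (hcurve s)
  have hψcont : ContinuousOn ψ (Set.Icc 0 1) :=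
    (fun s _ => ((hψderiv s).continuousAt).continuousWithinAt)
  obtain ⟨θ, hθ, hθeq⟩ := exists_hasDerivAt_eq_slope ψ (fun s => f' (c s) (t • d))
    zero_lt_one hψcont (fun s _ => hψderiv s)
  -- the intermediate point lies in C
  have hθ01 : θ * t ∈ Set.Icc (0:ℝ) 1 :=
    ⟨mul_nonneg hθ.1.le ht0, mul_le_one₀ hθ.2.le ht0 ht1⟩
  have hwmem : c θ ∈ C := by
    have : u + (θ * t) • d ∈ C := hCcv.add_smul_sub_mem hu hv hθ01
    simpa [hc, smul_smul] using this
  -- distance bound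
  have hdist : dist (c θ) u < δ := by
    have h1 : dist (c θ) u = θ * (t * ‖d‖) := by
      rw [dist_eq_norm]
      simp [hc, norm_smul, abs_of_nonneg hθ.1.le, abs_of_nonneg ht0, mul_assoc]
    have h2 : θ * (t * ‖d‖) < δ := by
      calc θ * (t * ‖d‖) ≤ 1 * (t * ‖d‖) :=
            mul_le_mul_of_nonneg_right hθ.2.le (by positivity)
        _ = t * ‖d‖ := one_mul _
        _ ≤ t * D := mul_le_mul_of_nonneg_left hdD ht0
        _ < δ := htD
    linarith [h1, h2]
  have hgrad : dist (f' (c θ)) (f' u) < ε := hδ (c θ) hwmem u hu hdist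
  -- bound ψ' θ
  have hbound : f' (c θ) (t • d) ≤ t * (f' u d) + t * (ε * D) := by
    have h1 : f' (c θ) (t • d) = f' u (t • d) + (f' (c θ) - f' u) (t • d) := by
      simp
      ring
    have h2 : (f' (c θ) - f' u) (t • d) ≤ ‖f' (c θ) - f' u‖ * ‖t • d‖ :=
      le_trans (le_abs_self _) ((f' (c θ) - f' u).le_opNorm _)
    have h3 : ‖f' (c θ) - f' u‖ * ‖t • d‖ ≤ ε * (t * D) := by
      have hn : ‖f' (c θ) - f' u‖ < ε := by rwa [dist_eq_norm] at hgrad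
      have hnd : ‖t • d‖ ≤ t * D := by
        rw [norm_smul, Real.norm_eq_abs, abs_of_nonneg ht0]
        exact mul_le_mul_of_nonneg_left hdD ht0
      have := mul_le_mul hn.le hnd (norm_nonneg _) hε.le
      linarith
    have h4 : f' u (t • d) = t * f' u d := by simp
    linarith [h1, h2, h3, h4.le, h4.ge]
  -- conclude via MVT equality
  have hψ1 : ψ 1 = f (u + t • d) := by simp [hψ, hc]
  have hψ0 : ψ 0 = f u := by simp [hψ, hc]
  have hslope : f' (c θ) (t • d) = ψ 1 - ψ 0 := by
    rw [hθeq]; ring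
  rw [hψ1, hψ0] at hslope
  linarith [hbound, hslope.le, hslope.ge]


/-- **Weak convergence of Frank–Wolfe iterates under strict convexity**
(Theorem 3.3 (i)). If `C` is weakly compact, `f'` is uniformly continuous on `C`, `f` is
strictly convex on `C`, and the stepsizes are chosen by line minimization or by the open
loop rule, then the minimization problem has a unique solution `x*` in `C` and the
Frank–Wolfe iterates converge weakly to `x*`. -/
theorem stmt_5
    {X : Type*} [NormedAddCommGroup X] [NormedSpace ℝ X] [CompleteSpace X]
    (C : Set X) (hCne : C.Nonempty) (hCcl : IsClosed C)
    (hCbd : Bornology.IsBounded C) (hCcv : Convex ℝ C)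
    (hCwc : IsCompact (⇑(toWeakSpace ℝ X) '' C))
    (f : X → ℝ) (f' : X → X →L[ℝ] ℝ)
    (hfconv : ConvexOn ℝ Set.univ f)
    (hfstrict : StrictConvexOn ℝ C f)
    (hfderiv : ∀ x : X, HasFDerivAt f (f' x) x)
    (hfUC : UniformContinuousOn f' C)
    (xstar : X) (hxstarC : xstar ∈ C) (hxstarmin : ∀ y ∈ C, f xstar ≤ f y)
    (x xbar : ℕ → X) (γ : ℕ → ℝ)
    (hx0 : x 0 ∈ C)
    (hxbarC : ∀ k, xbar k ∈ C)
    (hxbarmin : ∀ k, ∀ y ∈ C, f' (x k) (xbar k) ≤ f' (x k) y)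
    (hupdate : ∀ k, x (k + 1) = x k + γ k • (xbar k - x k))
    (hstep :
      ((∀ k, γ k ∈ Set.Icc (0 : ℝ) 1) ∧
        ∀ k, ∀ γ' ∈ Set.Icc (0 : ℝ) 1,
          f (x k + γ k • (xbar k - x k)) ≤ f (x k + γ' • (xbar k - x k)))
      ∨ ((∀ k, γ k ∈ Set.Ioc (0 : ℝ) 1) ∧ Tendsto γ atTop (𝓝 0) ∧
          Tendsto (fun n => ∑ k ∈ Finset.range n, γ k) atTop atTop)) :
    (∀ z ∈ C, (∀ y ∈ C, f z ≤ f y) → z = xstar) ∧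
      Tendsto (fun k => toWeakSpace ℝ X (x k)) atTop (𝓝 (toWeakSpace ℝ X xstar)) := by
  classical
  have grad : ∀ a b : X, f' a (b - a) ≤ f b - f a := grad_ineq' hfconv hfderiv
  -- uniqueness of the minimizer
  have huniq : ∀ z ∈ C, (∀ y ∈ C, f z ≤ f y) → z = xstar := by
    intro z hz hzmin
    by_contra hne
    have hfz : f z = f xstar := le_antisymm (hzmin xstar hxstarC) (hxstarmin z hz)
    have hmem : (1/2 : ℝ) • z + (1/2 : ℝ) • xstar ∈ C :=
      hCcv hz hxstarC (by norm_num) (by norm_num) (by norm_num)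
    have hlt := hfstrict.2 hz hxstarC hne (by norm_num : (0:ℝ) < 1/2)
      (by norm_num : (0:ℝ) < 1/2) (by norm_num)
    simp only [smul_eq_mul] at hlt
    rw [hfz] at hlt
    have := hxstarmin _ hmem
    linarith
  refine ⟨huniq, ?_⟩
  -- diameter bound
  obtain ⟨D₀, hD₀⟩ := Metric.isBounded_iff.1 hCbd
  set D : ℝ := max D₀ 1 with hDdef
  have hDpos : (0:ℝ) < D := lt_of_lt_of_le one_pos (le_max_right _ _)
  have hD : ∀ u ∈ C, ∀ v ∈ C, ‖u - v‖ ≤ D := by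
    intro u hu v hv
    rw [← dist_eq_norm]
    exact (hD₀ hu hv).trans (le_max_left _ _)
  -- stepsizes are in [0,1] in both cases
  have hγIcc : ∀ k, γ k ∈ Set.Icc (0:ℝ) 1 := by
    rcases hstep with ⟨h1, _⟩ | ⟨h1, _⟩
    · exact h1
    · exact fun k => ⟨(h1 k).1.le, (h1 k).2⟩
  -- the iterates stay in C
  have hxC : ∀ k, x k ∈ C := by
    intro k
    induction k with
    | zero => exact hx0
    | succ k ih =>
      rw [hupdate k]
      exact hCcv.add_smul_sub_mem ih (hxbarC k) (hγIcc k)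
  -- unify the two stepsize rules
  obtain ⟨β, hβIoc, hβ0, hβsum, hβdesc⟩ :
      ∃ β : ℕ → ℝ, (∀ k, β k ∈ Set.Ioc (0:ℝ) 1) ∧ Tendsto β atTop (𝓝 0) ∧
        Tendsto (fun n => ∑ k ∈ Finset.range n, β k) atTop atTop ∧
        ∀ k, f (x (k+1)) ≤ f (x k + β k • (xbar k - x k)) := by
    rcases hstep with ⟨hγIcc', hmin⟩ | ⟨hγIoc, hγ0, hγsum⟩
    · refine ⟨fun k => 1/((k:ℝ)+1), fun k => ?_, ?_, ?_, fun k => ?_⟩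
      · constructor
        · positivity
        · rw [div_le_one (by positivity)]
          linarith [Nat.cast_nonneg (α := ℝ) k]
      · exact tendsto_one_div_add_atTop_nhds_zero_nat
      · exact Real.tendsto_sum_range_one_div_nat_succ_atTop
      · rw [hupdate k]
        refine hmin k _ ⟨by positivity, ?_⟩
        rw [div_le_one (by positivity)]
        linarith [Nat.cast_nonneg (α := ℝ) k]
    · exact ⟨γ, hγIoc, hγ0, hγsum, fun k => le_of_eq (by rw [hupdate k])⟩
  -- the objective gap
  set h : ℕ → ℝ := fun k => f (x k) - f xstar with hhdef
  have hhnn : ∀ k, 0 ≤ h k := fun k => sub_nonneg.2 (hxstarmin _ (hxC k))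
  have hrec : ∀ ε > 0, ∀ᶠ k in atTop, h (k+1) ≤ (1 - β k) * h k + β k * ε := by
    intro ε hε
    have hεD : 0 < ε / D := div_pos hε hDpos
    obtain ⟨δ, hδpos, hkey⟩ := descent' hCcv hfderiv hfUC hD hεD
    have hev : ∀ᶠ k in atTop, β k * D < δ := by
      have hβD : Tendsto (fun k => β k * D) atTop (𝓝 0) := by
        simpa using hβ0.mul_const D
      exact hβD.eventually (gt_mem_nhds hδpos)
    filter_upwards [hev] with k hk
    have hβk := hβIoc k
    have hstep1 := hβdesc k
    have hstep2 := hkey (x k) (hxC k) (xbar k) (hxbarC k) (β k) ⟨hβk.1.le, hβk.2⟩ hk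
    rw [div_mul_cancel₀ ε hDpos.ne'] at hstep2
    have hlin : f' (x k) (xbar k - x k) ≤ f xstar - f (x k) := by
      have h1 : f' (x k) (xbar k) ≤ f' (x k) xstar := hxbarmin k xstar hxstarC
      have h2 : f' (x k) (xstar - x k) ≤ f xstar - f (x k) := grad _ _
      have h3 : f' (x k) (xbar k - x k) = f' (x k) (xbar k) - f' (x k) (x k) :=
        map_sub _ _ _
      have h4 : f' (x k) (xstar - x k) = f' (x k) xstar - f' (x k) (x k) :=
        map_sub _ _ _
      linarith [h3.le, h3.ge, h4.le, h4.ge]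
    have hmul : β k * (f' (x k) (xbar k - x k)) ≤ β k * (f xstar - f (x k)) :=
      mul_le_mul_of_nonneg_left hlin hβk.1.le
    show f (x (k+1)) - f xstar ≤ (1 - β k) * (f (x k) - f xstar) + β k * ε
    nlinarith [hstep1, hstep2, hmul]
  have hfx0 : Tendsto h atTop (𝓝 0) := recur_tendsto' hhnn hβIoc hβsum hrec
  have hfx : Tendsto (fun k => f (x k)) atTop (𝓝 (f xstar)) := by
    have := hfx0.add_const (f xstar)
    simp only [hhdef, zero_add, sub_add_cancel] at this
    exact this
  -- weak convergence via ultrafilters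
  rw [tendsto_iff_ultrafilter]
  intro U hU
  have hle : ↑(U.map (fun k => toWeakSpace ℝ X (x k))) ≤ 𝓟 (⇑(toWeakSpace ℝ X) '' C) := by
    rw [le_principal_iff]
    exact mem_map.2 (univ_mem' fun k => ⟨x k, hxC k, rfl⟩)
  obtain ⟨y, hyC, hy⟩ := hCwc.ultrafilter_le_nhds _ hle
  obtain ⟨z, hzC, rfl⟩ := hyC
  have hy' : Tendsto (fun k => toWeakSpace ℝ X (x k)) ↑U (𝓝 (toWeakSpace ℝ X z)) := hy
  have hz_eval : Tendsto (fun k => f' z (x k)) ↑U (𝓝 (f' z z)) := by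
    have hcont : Continuous fun w : WeakSpace ℝ X => (topDualPairing ℝ X).flip w (f' z) :=
      WeakBilin.eval_continuous _ _
    exact (hcont.tendsto (toWeakSpace ℝ X z)).comp hy'
  have hf_lim : Tendsto (fun k => f (x k)) ↑U (𝓝 (f xstar)) := hfx.mono_left hU
  have hkey : f z ≤ f xstar := by
    have hineq : ∀ k, f z + (f' z (x k) - f' z z) ≤ f (x k) := by
      intro k
      have hg := grad z (x k)
      have hm : f' z (x k - z) = f' z (x k) - f' z z := map_sub _ _ _
      linarith [hm.le, hm.ge]
    have htend : Tendsto (fun k => f z + (f' z (x k) - f' z z)) ↑U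
        (𝓝 (f z + (f' z z - f' z z))) :=
      tendsto_const_nhds.add (hz_eval.sub_const _)
    have := le_of_tendsto_of_tendsto' htend hf_lim hineq
    simpa using this
  have hzx : z = xstar := huniq z hzC fun y' hy'' => hkey.trans (hxstarmin y' hy'')
  rw [← hzx]
  exact hy'
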